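/- Let S be a string over an alphabet of size σ, let Y_S = y₁…y_c be any parsing of S, and let L be the sequence of phrase lengths. Then the k-bounded parsing cost satisfies C_k(Y_S) ≤ |S|·H_k(S) + |Y_S|·k·log σ, where H_k is the k-order empirical entropy. -/

import Mathlib

open Finset

/-- Number of (possibly overlapping) occurrences of `v` as a substring of `S`,
with the convention `|S|_ε = |S|`. -/
def occ {α : Type*} [DecidableEq α] (S v : List α) : ℕ :=
  if v = [] then S.length
  else ((List.range S.length).filter (fun i => (S.drop i).take v.length = v)).length

/-- Unnormalized k-order empirical entropy `|S| * H_k(S)` (logs base 2). -/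
noncomputable def nHk {Γ : Type*} [Fintype Γ] [DecidableEq Γ] (k : ℕ) (S : List Γ) : ℝ :=
  -∑ v : Fin k → Γ, ∑ a : Γ,
    (occ S (List.ofFn v ++ [a]) : ℝ) *
      Real.logb 2 ((occ S (List.ofFn v ++ [a]) : ℝ) / (occ S (List.ofFn v) : ℝ))

/-- The `k`-bounded phrase probability
`𝒫_k(y) = σ^{-min(|y|,k)} ∏_{j=k+1}^{|y|} |S|_{y[j-k..j]} / |S|_{y[j-k..j-1]}`. -/
noncomputable def kProb {Γ : Type*} [DecidableEq Γ] (σ k : ℕ) (S y : List Γ) : ℝ :=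
  ((σ : ℝ) ^ (min y.length k))⁻¹ *
    ∏ j ∈ Finset.range (y.length - k),
      ((occ S ((y.drop j).take (k + 1)) : ℝ) / (occ S ((y.drop j).take k) : ℝ))

/-- The `k`-bounded phrase cost `C_k(y) = -log 𝒫_k(y)`. -/
noncomputable def kCost {Γ : Type*} [DecidableEq Γ] (σ k : ℕ) (S y : List Γ) : ℝ :=
  -Real.logb 2 (kProb σ k S y)

/-- The `k`-bounded parsing cost `C_k(Y_S) = ∑ᵢ C_k(yᵢ)`. -/
noncomputable def kParseCost {Γ : Type*} [DecidableEq Γ] (σ k : ℕ) (S : List Γ)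
    (Y : List (List Γ)) : ℝ :=
  (Y.map (kCost σ k S)).sum

section Aux
set_option linter.unusedSectionVars false
variable {Γ : Type*} [DecidableEq Γ]

lemma occ_nil (v : List Γ) : occ ([] : List Γ) v = 0 := by
  unfold occ; split <;> simp

lemma occ_le_length (S v : List Γ) : occ S v ≤ S.length := by
  unfold occ; split
  · exact le_rfl
  · exact le_trans (List.length_filter_le _ _) (by simp)

lemma occ_pos (S v : List Γ) (h : v <:+: S) (hS : S ≠ []) : 0 < occ S v := by
  unfold occ
  split_ifs with hv
  · simpa [List.length_pos_iff] using hS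
  · obtain ⟨p, t, hpt⟩ := h
    have hmem : p.length ∈ (List.range S.length).filter
        (fun i => decide ((S.drop i).take v.length = v)) := by
      rw [List.mem_filter, List.mem_range]
      constructor
      · rw [← hpt]; simp; have : 0 < v.length := List.length_pos_iff.2 hv; omega
      · rw [← hpt, List.append_assoc, List.drop_left, List.take_left]; simp
    exact List.length_pos_iff.2 (fun hnil => by rw [hnil] at hmem; simp at hmem)

lemma occ_snoc_le (S w : List Γ) (a : Γ) : occ S (w ++ [a]) ≤ occ S w := by
  unfold occ
  rw [if_neg (by simp)]
  split_ifs with hw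
  · exact le_trans (List.length_filter_le _ _) (by simp)
  · apply List.Sublist.length_le
    apply List.monotone_filter_right
    intro i hi
    simp only [decide_eq_true_eq] at hi ⊢
    have := congrArg (List.take w.length) hi
    rwa [List.take_take, min_eq_left (by simp), List.take_left] at this

lemma pat_recover (a0 : Γ) (k : ℕ) (l : List Γ) (hl : l.length = k + 1) :
    List.ofFn (fun m : Fin k => l.getD m a0) ++ [l.getD k a0] = l := by
  apply List.ext_getElem
  · simp [hl]
  · intro i h1 h2
    rcases lt_or_ge i k with h | h
    · rw [List.getElem_append_left (by simpa)]
      simp [List.getD_eq_getElem, hl, h, Nat.lt_succ_of_lt h]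
    · have hik : i = k := by simp [hl] at h2; omega
      subst hik
      rw [List.getElem_append_right (by simp)]
      simp [List.getD_eq_getElem, hl]

lemma drop_off (Y : List (List Γ)) (i : ℕ) :
    Y.flatten.drop ((Y.take i).flatten.length) = (Y.drop i).flatten := by
  calc Y.flatten.drop ((Y.take i).flatten.length)
      = ((Y.take i).flatten ++ (Y.drop i).flatten).drop ((Y.take i).flatten.length) := by
        rw [← List.flatten_append, List.take_append_drop]
    _ = (Y.drop i).flatten := List.drop_left

lemma off_mono (Y : List (List Γ)) {i i' : ℕ} (h : i ≤ i') :
    (Y.take i).flatten.length ≤ (Y.take i').flatten.length := by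
  rw [show Y.take i = (Y.take i').take i by rw [List.take_take, min_eq_left h]]
  conv_rhs => rw [← List.take_append_drop i (Y.take i')]
  rw [List.flatten_append, List.length_append]
  exact Nat.le_add_right _ _

lemma off_step (Y : List (List Γ)) {i : ℕ} (hi : i < Y.length) :
    (Y.take (i+1)).flatten.length = (Y.take i).flatten.length + (Y.getD i []).length := by
  rw [List.take_succ, List.flatten_append, List.length_append]
  congr 1
  rw [List.getElem?_eq_getElem hi, List.getD_eq_getElem _ _ hi]
  simp

lemma drop_off_cons (Y : List (List Γ)) {i : ℕ} (hi : i < Y.length) :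
    Y.flatten.drop ((Y.take i).flatten.length)
      = Y.getD i [] ++ (Y.drop (i+1)).flatten := by
  rw [drop_off, List.drop_eq_getElem_cons hi, List.flatten_cons, List.getD_eq_getElem _ _ hi]

lemma occ_eq_card (S u : List Γ) (hu : u ≠ []) :
    occ S u = ((Finset.range S.length).filter
      (fun i => (S.drop i).take u.length = u)).card := by
  rw [occ, if_neg hu]
  rfl

lemma parse_sum (σ k : ℕ) (S : List Γ) (Y : List (List Γ)) :
    kParseCost σ k S Y = ∑ i ∈ Finset.range Y.length, kCost σ k S (Y.getD i []) := by
  induction Y with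
  | nil => simp [kParseCost]
  | cons a Y ih =>
    rw [kParseCost, List.map_cons, List.sum_cons, List.length_cons,
      Finset.sum_range_succ']
    simp only [List.getD_cons_succ, List.getD_cons_zero]
    rw [← ih, kParseCost, add_comm]

lemma kCost_eq {σ k : ℕ} (hσ : 0 < σ) (S y : List Γ)
    (hpos : ∀ j ∈ Finset.range (y.length - k),
      (0:ℝ) < ((occ S ((y.drop j).take (k + 1)) : ℝ) / (occ S ((y.drop j).take k) : ℝ))) :
    kCost σ k S y = (min y.length k : ℝ) * Real.logb 2 σ +
      ∑ j ∈ Finset.range (y.length - k),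
        -Real.logb 2 ((occ S ((y.drop j).take (k + 1)) : ℝ) /
          (occ S ((y.drop j).take k) : ℝ)) := by
  have hσ' : ((σ:ℝ) ^ (min y.length k))⁻¹ ≠ 0 := by positivity
  have hprod : ∀ j ∈ Finset.range (y.length - k),
      ((occ S ((y.drop j).take (k + 1)) : ℝ) / (occ S ((y.drop j).take k) : ℝ)) ≠ 0 :=
    fun j hj => ne_of_gt (hpos j hj)
  rw [kCost, kProb, Real.logb_mul hσ' (Finset.prod_ne_zero_iff.2 hprod),
    Real.logb_inv, Real.logb_pow, Real.logb_prod _ _ hprod, neg_add, neg_neg,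
    ← Finset.sum_neg_distrib]
  norm_cast

end Aux

theorem stmt3 {Γ : Type*} [Fintype Γ] [DecidableEq Γ] (S : List Γ) (k : ℕ)
    (Y : List (List Γ)) (hY : Y.flatten = S) (hne : ∀ y ∈ Y, y ≠ []) :
    kParseCost (Fintype.card Γ) k S Y ≤
      nHk k S + (Y.length : ℝ) * k * Real.logb 2 (Fintype.card Γ) := by
  classical
  by_cases hS : S = []
  · subst hS
    have hYnil : Y = [] := by
      cases Y with
      | nil => rfl
      | cons h t =>
        exact absurd (List.flatten_eq_nil_iff.mp hY h (by simp)) (hne h (by simp))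
    subst hYnil
    simp [kParseCost, nHk, occ_nil]
  -- main case
  have a0 : Γ := S.head (by exact hS)
  haveI : Nonempty Γ := ⟨a0⟩
  set σ := Fintype.card Γ with hσdef
  have hσ : 0 < σ := Fintype.card_pos
  set n := Y.length with hn
  set yy : ℕ → List Γ := fun i => Y.getD i [] with hyy
  set off : ℕ → ℕ := fun i => (Y.take i).flatten.length with hoff
  have hdropcons : ∀ i < n, S.drop (off i) = yy i ++ (Y.drop (i+1)).flatten := by
    intro i hi
    rw [← hY]
    exact drop_off_cons Y hi
  have hinfix : ∀ i < n, yy i <:+: S := by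
    intro i hi
    refine ⟨S.take (off i), (Y.drop (i+1)).flatten, ?_⟩
    rw [List.append_assoc, ← hdropcons i hi, List.take_append_drop]
  have hsub : ∀ i < n, ∀ j m : ℕ, ((yy i).drop j).take m <:+: S := by
    intro i hi j m
    exact (((List.take_prefix _ _).isInfix).trans
      ((List.drop_suffix _ _).isInfix)).trans (hinfix i hi)
  have hoccpos : ∀ i < n, ∀ j m : ℕ, (0:ℝ) < (occ S (((yy i).drop j).take m) : ℝ) := by
    intro i hi j m
    exact_mod_cast occ_pos S _ (hsub i hi j m) hS
  have hratio : ∀ i ∈ Finset.range n, ∀ j ∈ Finset.range ((yy i).length - k),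
      (0:ℝ) < ((occ S (((yy i).drop j).take (k + 1)) : ℝ) /
        (occ S (((yy i).drop j).take k) : ℝ)) := by
    intro i hi j _
    exact div_pos (hoccpos i (Finset.mem_range.mp hi) j (k+1))
      (hoccpos i (Finset.mem_range.mp hi) j k)
  -- split the cost
  rw [parse_sum]
  rw [Finset.sum_congr rfl (fun i hi => kCost_eq hσ S (yy i) (hratio i hi)),
    Finset.sum_add_distrib]
  -- part 1 bound
  have hlogσ : 0 ≤ Real.logb 2 (σ:ℝ) := Real.logb_nonneg one_lt_two (by exact_mod_cast hσ)
  have hb1 : ∑ i ∈ Finset.range n, (min (yy i).length k : ℝ) * Real.logb 2 (σ:ℝ)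
      ≤ (n:ℝ) * k * Real.logb 2 (σ:ℝ) := by
    calc ∑ i ∈ Finset.range n, (min (yy i).length k : ℝ) * Real.logb 2 (σ:ℝ)
        ≤ ∑ _i ∈ Finset.range n, (k:ℝ) * Real.logb 2 (σ:ℝ) :=
          Finset.sum_le_sum (fun i _ => mul_le_mul_of_nonneg_right
            (by exact_mod_cast min_le_right (yy i).length k) hlogσ)
      _ = (n:ℝ) * k * Real.logb 2 (σ:ℝ) := by
          rw [Finset.sum_const, Finset.card_range, nsmul_eq_mul]; ring
  -- part 2
  set A : Finset ((_ : ℕ) × ℕ) :=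
    (Finset.range n).sigma (fun i => Finset.range ((yy i).length - k)) with hA
  set f : (Σ _ : ℕ, ℕ) → (Fin k → Γ) × Γ := fun x =>
    (fun m : Fin k => ((((yy x.1).drop x.2).take (k+1)).getD m a0),
      ((((yy x.1).drop x.2).take (k+1)).getD k a0)) with hf
  set G : (Fin k → Γ) × Γ → ℝ := fun u =>
    -Real.logb 2 ((occ S (List.ofFn u.1 ++ [u.2]) : ℝ) / (occ S (List.ofFn u.1) : ℝ)) with hG
  have hxA : ∀ x ∈ A, x.1 < n ∧ x.2 < (yy x.1).length - k := by
    intro x hx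
    rw [hA, Finset.mem_sigma, Finset.mem_range, Finset.mem_range] at hx
    exact hx
  have hlen : ∀ x ∈ A, (((yy x.1).drop x.2).take (k+1)).length = k + 1 := by
    intro x hx
    obtain ⟨h1, h2⟩ := hxA x hx
    simp only [List.length_take, List.length_drop]
    omega
  have hpat : ∀ x ∈ A, List.ofFn (f x).1 ++ [(f x).2] = ((yy x.1).drop x.2).take (k+1) :=
    fun x hx => pat_recover a0 k _ (hlen x hx)
  have hpat2 : ∀ x ∈ A, List.ofFn (f x).1 = ((yy x.1).drop x.2).take k := by
    intro x hx
    calc List.ofFn (f x).1 = (List.ofFn (f x).1 ++ [(f x).2]).take k :=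
          (List.take_left' (by simp)).symm
      _ = (((yy x.1).drop x.2).take (k+1)).take k := by rw [hpat x hx]
      _ = ((yy x.1).drop x.2).take k := by rw [List.take_take, min_eq_left (by omega)]
  have hterm : ∑ i ∈ Finset.range n, ∑ j ∈ Finset.range ((yy i).length - k),
      -Real.logb 2 ((occ S (((yy i).drop j).take (k + 1)) : ℝ) /
        (occ S (((yy i).drop j).take k) : ℝ)) = ∑ x ∈ A, G (f x) := by
    rw [hA, Finset.sum_sigma]
    refine Finset.sum_congr rfl (fun i hi => Finset.sum_congr rfl (fun j hj => ?_))
    have hx : (⟨i, j⟩ : Σ _ : ℕ, ℕ) ∈ A := by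
      rw [hA, Finset.mem_sigma]; exact ⟨hi, hj⟩
    rw [hG]
    dsimp only
    rw [hpat ⟨i,j⟩ hx, hpat2 ⟨i,j⟩ hx]
  -- positions
  have hoffn : off n = S.length := by
    show (Y.take n).flatten.length = S.length
    rw [hn, List.take_length, hY]
  have hstep : ∀ i, i < n → off (i+1) = off i + (yy i).length := fun i hi => off_step Y hi
  have hdropx : ∀ x ∈ A, S.drop (off x.1 + x.2)
      = ((yy x.1).drop x.2) ++ (Y.drop (x.1+1)).flatten := by
    intro x hx
    obtain ⟨h1, h2⟩ := hxA x hx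
    rw [← List.drop_drop, hdropcons x.1 h1, List.drop_append]
    have hz : x.2 - (yy x.1).length = 0 := by omega
    rw [hz, List.drop_zero]
  have hmatch : ∀ x ∈ A, (S.drop (off x.1 + x.2)).take (k+1)
      = ((yy x.1).drop x.2).take (k+1) := by
    intro x hx
    obtain ⟨h1, h2⟩ := hxA x hx
    rw [hdropx x hx, List.take_append]
    have hz : (k+1) - ((yy x.1).drop x.2).length = 0 := by
      rw [List.length_drop]; omega
    rw [hz, List.take_zero, List.append_nil]
  have hlt : ∀ x ∈ A, off x.1 + x.2 < S.length := by
    intro x hx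
    obtain ⟨h1, h2⟩ := hxA x hx
    have e1 : off (x.1+1) = off x.1 + (yy x.1).length := hstep x.1 h1
    have e2 : off (x.1+1) ≤ off n := off_mono Y h1
    omega
  have key : ∀ x ∈ A, ∀ x' ∈ A, x.1 < x'.1 → off x.1 + x.2 < off x'.1 + x'.2 := by
    intro x hx x' hx' hlt'
    obtain ⟨h1, h2⟩ := hxA x hx
    have e1 : off (x.1+1) = off x.1 + (yy x.1).length := hstep x.1 h1
    have e2 : off (x.1+1) ≤ off x'.1 := off_mono Y hlt'
    omega
  have hfiber : ∀ u : (Fin k → Γ) × Γ,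
      ((A.filter (fun x => f x = u)).card : ℝ) ≤ (occ S (List.ofFn u.1 ++ [u.2]) : ℝ) := by
    intro u
    have hcard : (A.filter (fun x => f x = u)).card ≤ occ S (List.ofFn u.1 ++ [u.2]) := by
      rw [occ_eq_card S _ (by simp)]
      apply Finset.card_le_card_of_injOn (fun x => off x.1 + x.2)
      · intro x hx'
        obtain ⟨hxA', hfx⟩ := Finset.mem_filter.mp hx'
        rw [Finset.mem_coe, Finset.mem_filter, Finset.mem_range]
        refine ⟨hlt x hxA', ?_⟩
        have hlength : (List.ofFn u.1 ++ [u.2]).length = k + 1 := by simp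
        rw [hlength, hmatch x hxA', ← hfx]
        exact (hpat x hxA').symm
      · intro x hx1 x' hx2 heq
        have hx1' := (Finset.mem_filter.mp (Finset.mem_coe.mp hx1)).1
        have hx2' := (Finset.mem_filter.mp (Finset.mem_coe.mp hx2)).1
        simp only at heq
        rcases lt_trichotomy x.1 x'.1 with h | h | h
        · exact absurd heq (ne_of_lt (key x hx1' x' hx2' h))
        · obtain ⟨i, j⟩ := x
          obtain ⟨i', j'⟩ := x'
          simp only at h heq
          subst h
          have : j = j' := by omega
          subst this
          rfl
        · exact absurd heq.symm (ne_of_lt (key x' hx2' x hx1' h))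
    exact_mod_cast hcard
  have hGnn : ∀ u : (Fin k → Γ) × Γ, 0 ≤ G u := by
    intro u
    simp only [hG]
    rw [neg_nonneg]
    rcases Nat.eq_zero_or_pos (occ S (List.ofFn u.1)) with h0 | h0
    · have h1 : occ S (List.ofFn u.1 ++ [u.2]) = 0 :=
        Nat.le_zero.mp (h0 ▸ occ_snoc_le S _ u.2)
      simp [h1, h0]
    · apply Real.logb_nonpos one_lt_two
      · positivity
      · rw [div_le_one (by exact_mod_cast h0)]
        exact_mod_cast occ_snoc_le S _ u.2
  have hn2 : nHk k S = ∑ u : (Fin k → Γ) × Γ,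
      (occ S (List.ofFn u.1 ++ [u.2]) : ℝ) * G u := by
    rw [nHk, Fintype.sum_prod_type, ← Finset.sum_neg_distrib]
    refine Finset.sum_congr rfl (fun v _ => ?_)
    rw [← Finset.sum_neg_distrib]
    refine Finset.sum_congr rfl (fun a _ => ?_)
    simp only [hG]
    ring
  have hsum2 : ∑ x ∈ A, G (f x) ≤ nHk k S := by
    rw [← Finset.sum_fiberwise_of_maps_to (fun x _ => Finset.mem_univ (f x))
      (fun x => G (f x)), hn2]
    apply Finset.sum_le_sum
    intro u _
    calc ∑ x ∈ A.filter (fun x => f x = u), G (f x)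
        = ∑ _x ∈ A.filter (fun x => f x = u), G u :=
          Finset.sum_congr rfl (fun x hx => by rw [(Finset.mem_filter.mp hx).2])
      _ = ((A.filter (fun x => f x = u)).card : ℝ) * G u := by
          rw [Finset.sum_const, nsmul_eq_mul]
      _ ≤ (occ S (List.ofFn u.1 ++ [u.2]) : ℝ) * G u :=
          mul_le_mul_of_nonneg_right (hfiber u) (hGnn u)
  rw [hterm]
  linarith [hb1, hsum2]
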